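/- Let p be an odd prime, G a cyclic group of order p^n with fixed generator σ, and H_t the subgroup generated by σ^{p^t}. Fix nonnegative integers m_0,…,m_n and index pairs (t,j) with 0 ≤ t ≤ n, 1 ≤ j ≤ m_t. Let M = ⊕_{(t,j)} ℤ_p[G/H_t]·e_{(t,j)} and M' = ⊕_{(t,j)} ℤ_p[G/H_t]·P_{(t,j)} be ℤ_p[G]-modules, each given as a direct sum of free ℤ_p[G/H_t]-modules of rank one on the indicated generators. Let Φ: M → M' be a ℤ_p[G]-module isomorphism, and choose any elements Φ_{(t,j),(s,i)} ∈ ℤ_p[G] such that Φ(e_{(s,i)}) = Σ_{(t,j)} Φ_{(t,j),(s,i)}·P_{(t,j)} for all (s,i). Then for every character ψ: G → ℂ_p^× (with t_ψ defined by ker(ψ) = H_{t_ψ}), the determinant det(ψ(Φ_{t_ψ})) of the matrix obtained by applying ψ entrywise to the submatrix Φ_{t_ψ} := (Φ_{(t,j),(s,i)})_{t ≥ t_ψ, s ≥ t_ψ} is a unit of the ring ℤ_p[ψ] generated over ℤ_p by the values of ψ. -/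

import Mathlib

open scoped Classical

/-- Index pairs `(t, j)` with `0 ≤ t ≤ n` and `1 ≤ j ≤ m t`. -/
abbrev Idx (n : ℕ) (m : Fin (n + 1) → ℕ) : Type :=
  Σ t : Fin (n + 1), Fin (m t)

/-- The index type for the `ℤ_p`-basis of `⊕_{(t,j)} ℤ_p[G/H_t]`. -/
abbrev BIdx (p n : ℕ) (m : Fin (n + 1) → ℕ) (G : Type) [Group G] (σ : G) : Type :=
  Σ ti : Idx n m, G ⧸ Subgroup.zpowers (σ ^ p ^ (ti.1 : ℕ))

section Aux

variable {p n : ℕ} [Fact p.Prime] {G : Type} [CommGroup G] [Fintype G] {σ : G} {m : Fin (n + 1) → ℕ}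
variable {K : Type} [Field K] [Algebra ℤ_[p] K]
variable {M' : Type} [AddCommGroup M'] [Module (MonoidAlgebra ℤ_[p] G) M']
  [Module ℤ_[p] M'] [IsScalarTower ℤ_[p] (MonoidAlgebra ℤ_[p] G) M']

lemma aux_smul_expand (a : MonoidAlgebra ℤ_[p] G) (x : M') :
    a • x = ∑ g : G, a.coeff g • (MonoidAlgebra.of ℤ_[p] G g • x) := by
  have h1 : a = ∑ g : G, MonoidAlgebra.single g (a.coeff g) := by
    conv_lhs => rw [← MonoidAlgebra.sum_coeff_single a]
    rw [Finsupp.sum_fintype]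
    intro g; exact MonoidAlgebra.single_zero g
  calc a • x = (∑ g : G, MonoidAlgebra.single (R := ℤ_[p]) g (a.coeff g)) • x := by rw [← h1]
    _ = ∑ g : G, MonoidAlgebra.single (R := ℤ_[p]) g (a.coeff g) • x := Finset.sum_smul
    _ = ∑ g : G, a.coeff g • (MonoidAlgebra.of ℤ_[p] G g • x) := by
        refine Finset.sum_congr rfl fun g _ => ?_
        have h2 : MonoidAlgebra.single (R := ℤ_[p]) g (a.coeff g)
            = a.coeff g • MonoidAlgebra.of ℤ_[p] G g := by
          rw [MonoidAlgebra.of_apply, MonoidAlgebra.smul_single', mul_one]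
        rw [h2, smul_assoc]

noncomputable def Lfun (bM' : Module.Basis (BIdx p n m G σ) ℤ_[p] M') (ψ : G →* K)
    (tj : Idx n m) (x : M') : K :=
  ∑ q : G ⧸ Subgroup.zpowers (σ ^ p ^ (tj.1 : ℕ)), (bM'.repr x ⟨tj, q⟩) • ψ (Quotient.out q)

lemma Lfun_sum {ι : Type} (bM' : Module.Basis (BIdx p n m G σ) ℤ_[p] M') (ψ : G →* K)
    (tj : Idx n m) (s : Finset ι) (v : ι → M') :
    Lfun bM' ψ tj (∑ i ∈ s, v i) = ∑ i ∈ s, Lfun bM' ψ tj (v i) := by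
  unfold Lfun
  rw [Finset.sum_comm]
  refine Finset.sum_congr rfl fun q _ => ?_
  rw [map_sum, Finsupp.finset_sum_apply, Finset.sum_smul]

lemma Lfun_smul (bM' : Module.Basis (BIdx p n m G σ) ℤ_[p] M') (ψ : G →* K)
    (tj : Idx n m) (c : ℤ_[p]) (x : M') :
    Lfun bM' ψ tj (c • x) = c • Lfun bM' ψ tj x := by
  unfold Lfun
  rw [Finset.smul_sum]
  refine Finset.sum_congr rfl fun q _ => ?_
  rw [map_smul, Finsupp.smul_apply, smul_eq_mul, mul_smul]

lemma Lfun_basis (bM' : Module.Basis (BIdx p n m G σ) ℤ_[p] M') (ψ : G →* K)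
    (tj tj' : Idx n m) (g : G) :
    Lfun bM' ψ tj (bM' ⟨tj', QuotientGroup.mk g⟩) =
      if tj' = tj then
        ψ (Quotient.out (QuotientGroup.mk g : G ⧸ Subgroup.zpowers (σ ^ p ^ (tj.1 : ℕ)))) else 0 := by
  unfold Lfun
  by_cases h : tj' = tj
  · subst h
    simp only [if_true]
    rw [Finset.sum_eq_single (QuotientGroup.mk g)]
    · rw [Module.Basis.repr_self, Finsupp.single_apply_left (fun a b hab => (Sigma.mk.inj_iff.1 hab).2.eq),
        Finsupp.single_apply, if_pos rfl, one_smul]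
    · intro q _ hq
      rw [Module.Basis.repr_self, Finsupp.single_apply_left (fun a b hab => (Sigma.mk.inj_iff.1 hab).2.eq),
        Finsupp.single_apply, if_neg (fun hh => hq hh.symm), zero_smul]
    · intro h; exact absurd (Finset.mem_univ _) h
  · rw [if_neg h]
    refine Finset.sum_eq_zero fun q _ => ?_
    rw [Module.Basis.repr_self, Finsupp.single_apply, if_neg, zero_smul]
    intro hh
    exact h (Sigma.mk.inj_iff.1 hh).1

end Aux

/-- Let `p` be an odd prime, `G` cyclic of order `p ^ n` with generator
`σ`, `H_t = ⟨σ ^ p ^ t⟩`.  Let `M = ⊕_{(t,j)} ℤ_p[G/H_t]·e_{(t,j)}` and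
`M' = ⊕_{(t,j)} ℤ_p[G/H_t]·P_{(t,j)}` be `ℤ_p[G]`-modules given as direct sums of free
rank-one `ℤ_p[G/H_t]`-modules (encoded via `ℤ_p`-bases of `G/H_t`-translates of the
generators).  Let `Φ : M → M'` be a `ℤ_p[G]`-isomorphism with coefficients
`Φ_{(t,j),(s,i)} ∈ ℤ_p[G]` satisfying `Φ(e_{(s,i)}) = ∑_{(t,j)} Φ_{(t,j),(s,i)}·P_{(t,j)}`.
Then for every character `ψ : G → ℂ_p^×` with `ker ψ = H_{t_ψ}`, the determinant of the
matrix obtained by applying `ψ` entrywise to the submatrix `(Φ_{(t,j),(s,i)})_{t,s ≥ t_ψ}`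
is a unit of the subring `ℤ_p[ψ]` of `ℂ_p` generated over `ℤ_p` by the values of `ψ`.
(Here `ℂ_p` is modelled as an algebraically closed field `K` with compatible `ℤ_p`- and
`ℚ_p`-algebra structures.) -/
theorem statement8 (p : ℕ) [Fact p.Prime] (hp2 : p ≠ 2) (n : ℕ)
    (G : Type) [CommGroup G] [Fintype G]
    (σ : G) (hσ : ∀ g : G, g ∈ Subgroup.zpowers σ) (hcard : Fintype.card G = p ^ n)
    (m : Fin (n + 1) → ℕ)
    (K : Type) [Field K] [Algebra ℚ_[p] K] [Algebra ℤ_[p] K]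
    [IsScalarTower ℤ_[p] ℚ_[p] K] [IsAlgClosed K]
    (M : Type) [AddCommGroup M] [Module (MonoidAlgebra ℤ_[p] G) M]
    [Module ℤ_[p] M] [IsScalarTower ℤ_[p] (MonoidAlgebra ℤ_[p] G) M]
    (M' : Type) [AddCommGroup M'] [Module (MonoidAlgebra ℤ_[p] G) M']
    [Module ℤ_[p] M'] [IsScalarTower ℤ_[p] (MonoidAlgebra ℤ_[p] G) M']
    (e : Idx n m → M)
    (bM : Module.Basis (BIdx p n m G σ) ℤ_[p] M)
    (hbM : ∀ (ti : Idx n m) (g : G),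
      bM ⟨ti, QuotientGroup.mk g⟩ = MonoidAlgebra.of ℤ_[p] G g • e ti)
    (P : Idx n m → M')
    (bM' : Module.Basis (BIdx p n m G σ) ℤ_[p] M')
    (hbM' : ∀ (ti : Idx n m) (g : G),
      bM' ⟨ti, QuotientGroup.mk g⟩ = MonoidAlgebra.of ℤ_[p] G g • P ti)
    (Φ : M ≃ₗ[MonoidAlgebra ℤ_[p] G] M')
    (Φmat : Idx n m → Idx n m → MonoidAlgebra ℤ_[p] G)
    (hΦmat : ∀ si : Idx n m, Φ (e si) = ∑ tj : Idx n m, Φmat tj si • P tj)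
    (ψ : G →* K) (tψ : ℕ) (htψ : tψ ≤ n)
    (hker : ∀ g : G, ψ g = 1 ↔ g ∈ Subgroup.zpowers (σ ^ p ^ tψ)) :
    Matrix.det (Matrix.of fun r c : {x : Idx n m // tψ ≤ (x.1 : ℕ)} =>
        MonoidAlgebra.lift ℤ_[p] K G ψ (Φmat r.1 c.1)) ∈
      Algebra.adjoin ℤ_[p] (Set.range fun g : G => ψ g) ∧
    ∃ y ∈ Algebra.adjoin ℤ_[p] (Set.range fun g : G => ψ g),
      Matrix.det (Matrix.of fun r c : {x : Idx n m // tψ ≤ (x.1 : ℕ)} =>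
        MonoidAlgebra.lift ℤ_[p] K G ψ (Φmat r.1 c.1)) * y = 1 := by
  classical
  set f : MonoidAlgebra ℤ_[p] G →ₐ[ℤ_[p]] K := MonoidAlgebra.lift ℤ_[p] K G ψ with hf
  set O : Subalgebra ℤ_[p] K := Algebra.adjoin ℤ_[p] (Set.range fun g : G => ψ g) with hO
  -- values of f lie in O
  have hfO : ∀ a : MonoidAlgebra ℤ_[p] G, f a ∈ O := by
    intro a
    rw [hf, MonoidAlgebra.lift_apply, Finsupp.sum]
    exact Subalgebra.sum_mem _ fun g _ =>
      Subalgebra.smul_mem _ (Algebra.subset_adjoin (Set.mem_range_self g)) _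
  -- ψ kills H_t for t ≥ tψ
  have hker' : ∀ (t : ℕ), tψ ≤ t → ∀ g ∈ Subgroup.zpowers (σ ^ p ^ t), ψ g = 1 := by
    intro t ht g hg
    refine (hker g).2 ?_
    have h1 : σ ^ p ^ t = (σ ^ p ^ tψ) ^ p ^ (t - tψ) := by
      rw [← pow_mul, ← pow_add]
      have h0 : tψ + (t - tψ) = t := by omega
      rw [h0]
    have h2 : σ ^ p ^ t ∈ Subgroup.zpowers (σ ^ p ^ tψ) := by
      rw [h1]; exact Subgroup.pow_mem _ (Subgroup.mem_zpowers _) _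
    exact Subgroup.zpowers_le.2 h2 hg
  have horder : orderOf σ = p ^ n := by
    rw [orderOf_eq_card_of_forall_mem_zpowers hσ, Nat.card_eq_fintype_card, hcard]
  -- ψ (σ ^ p ^ s) ≠ 1 for s < tψ
  have hnontriv : ∀ s : ℕ, s < tψ → ψ (σ ^ p ^ s) ≠ 1 := by
    intro s hs h1
    obtain ⟨k, hk⟩ := (hker _).1 h1
    have h2 : (σ ^ p ^ s) ^ p ^ (n - tψ) = 1 := by
      rw [← hk, ← zpow_natCast ((σ ^ p ^ tψ) ^ k), ← zpow_mul, mul_comm, zpow_mul,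
        zpow_natCast, ← pow_mul, ← pow_add]
      have h3 : tψ + (n - tψ) = n := by omega
      rw [h3, ← horder, pow_orderOf_eq_one, one_zpow]
    rw [← pow_mul, ← pow_add] at h2
    have h4 : p ^ n ∣ p ^ (s + (n - tψ)) := horder ▸ orderOf_dvd_of_pow_eq_one h2
    have h5 := (Nat.pow_dvd_pow_iff_le_right (Nat.Prime.one_lt Fact.out)).1 h4
    omega
  -- ψ factors through cosets of H_t for t ≥ tψ
  have hout : ∀ (t : Fin (n + 1)), tψ ≤ (t : ℕ) → ∀ g : G,
      ψ (Quotient.out (QuotientGroup.mk g : G ⧸ Subgroup.zpowers (σ ^ p ^ (t : ℕ)))) = ψ g := by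
    intro t ht g
    set q : G ⧸ Subgroup.zpowers (σ ^ p ^ (t : ℕ)) := QuotientGroup.mk g with hq
    have h1 : (QuotientGroup.mk (Quotient.out q) : G ⧸ Subgroup.zpowers (σ ^ p ^ (t : ℕ))) = q :=
      QuotientGroup.out_eq' q
    have h2 : (Quotient.out q)⁻¹ * g ∈ Subgroup.zpowers (σ ^ p ^ (t : ℕ)) := by
      rw [hq] at h1
      exact QuotientGroup.eq.1 h1
    have h3 := hker' _ ht _ h2
    calc ψ (Quotient.out q) = ψ (Quotient.out q) * ψ ((Quotient.out q)⁻¹ * g) := by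
          rw [h3, mul_one]
      _ = ψ g := by rw [← map_mul, mul_inv_cancel_left]
  -- evaluation of Lfun on a • P tj'
  have hLP : ∀ (tj : Idx n m), tψ ≤ (tj.1 : ℕ) → ∀ (a : MonoidAlgebra ℤ_[p] G) (tj' : Idx n m),
      Lfun bM' ψ tj (a • P tj') = (if tj' = tj then 1 else 0) * f a := by
    intro tj htj a tj'
    rw [aux_smul_expand a (P tj')]
    simp only [← hbM']
    rw [Lfun_sum]
    simp only [Lfun_smul, Lfun_basis]
    by_cases h : tj' = tj
    · subst h
      simp only [eq_self_iff_true, if_true, one_mul]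
      rw [hf, MonoidAlgebra.lift_apply, Finsupp.sum_fintype]
      · exact Finset.sum_congr rfl fun g _ => by rw [hout tj'.1 htj g]
      · intro g; exact zero_smul _ _
    · simp only [if_neg h, smul_zero, Finset.sum_const_zero, zero_mul]
  -- vanishing of ψ(Φmat) below the diagonal block
  have hvan : ∀ (tj si : Idx n m), tψ ≤ (tj.1 : ℕ) → (si.1 : ℕ) < tψ →
      f (Φmat tj si) = 0 := by
    intro tj si htj hsi
    have hfix : MonoidAlgebra.of ℤ_[p] G (σ ^ p ^ (si.1 : ℕ)) • e si = e si := by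
      rw [← hbM si (σ ^ p ^ (si.1 : ℕ))]
      have h1 : (QuotientGroup.mk (σ ^ p ^ (si.1 : ℕ)) :
          G ⧸ Subgroup.zpowers (σ ^ p ^ (si.1 : ℕ))) = QuotientGroup.mk (1 : G) := by
        rw [QuotientGroup.eq]
        simpa using Subgroup.mem_zpowers (σ ^ p ^ (si.1 : ℕ))
      rw [h1, hbM si 1, map_one, one_smul]
    have h2 : ∑ tj' : Idx n m, Φmat tj' si • P tj'
        = ∑ tj' : Idx n m,
            (MonoidAlgebra.of ℤ_[p] G (σ ^ p ^ (si.1 : ℕ)) * Φmat tj' si) • P tj' := by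
      calc ∑ tj' : Idx n m, Φmat tj' si • P tj' = Φ (e si) := (hΦmat si).symm
        _ = Φ (MonoidAlgebra.of ℤ_[p] G (σ ^ p ^ (si.1 : ℕ)) • e si) := by rw [hfix]
        _ = MonoidAlgebra.of ℤ_[p] G (σ ^ p ^ (si.1 : ℕ)) • Φ (e si) := map_smul Φ _ _
        _ = _ := by
            rw [hΦmat si, Finset.smul_sum]
            exact Finset.sum_congr rfl fun tj' _ => smul_smul _ _ _
    have h3 := congrArg (Lfun bM' ψ tj) h2
    rw [Lfun_sum, Lfun_sum] at h3
    simp only [hLP tj htj, ite_mul, one_mul, zero_mul, Finset.sum_ite_eq',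
      Finset.mem_univ, if_pos] at h3
    rw [map_mul, MonoidAlgebra.lift_of] at h3
    have h4 : (ψ (σ ^ p ^ (si.1 : ℕ)) - 1) * f (Φmat tj si) = 0 := by
      rw [sub_mul, one_mul, ← h3, sub_self]
    rcases mul_eq_zero.1 h4 with h5 | h5
    · exact absurd (by rwa [sub_eq_zero] at h5) (hnontriv _ hsi)
    · exact h5
  -- the matrix of the inverse
  set Ψmat : Idx n m → Idx n m → MonoidAlgebra ℤ_[p] G := fun si tj =>
    ∑ q : G ⧸ Subgroup.zpowers (σ ^ p ^ (si.1 : ℕ)),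
      bM.repr (Φ.symm (P tj)) ⟨si, q⟩ • MonoidAlgebra.of ℤ_[p] G (Quotient.out q) with hΨ
  have hΨe : ∀ tj : Idx n m, Φ.symm (P tj) = ∑ si : Idx n m, Ψmat si tj • e si := by
    intro tj
    conv_lhs => rw [← Module.Basis.sum_repr bM (Φ.symm (P tj))]
    rw [← Finset.univ_sigma_univ, Finset.sum_sigma]
    refine Finset.sum_congr rfl fun si _ => ?_
    rw [hΨ, Finset.sum_smul]
    refine Finset.sum_congr rfl fun q _ => ?_
    have h1 := hbM si (Quotient.out q)
    rw [QuotientGroup.out_eq'] at h1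
    rw [smul_assoc, ← h1]
  have hPtj : ∀ tj : Idx n m,
      P tj = ∑ tj' : Idx n m, (∑ si : Idx n m, Φmat tj' si * Ψmat si tj) • P tj' := by
    intro tj
    conv_lhs => rw [← Φ.apply_symm_apply (P tj), hΨe tj]
    rw [map_sum]
    simp only [map_smul, hΦmat, Finset.smul_sum, smul_smul]
    rw [Finset.sum_comm]
    refine Finset.sum_congr rfl fun tj' _ => ?_
    rw [Finset.sum_smul]
    exact Finset.sum_congr rfl fun si _ => by rw [mul_comm]
  have hprod : ∀ (tj' tj : Idx n m), tψ ≤ (tj'.1 : ℕ) →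
      ∑ si : Idx n m, f (Φmat tj' si) * f (Ψmat si tj) = if tj = tj' then 1 else 0 := by
    intro tj' tj h
    have h0 : Lfun bM' ψ tj' (P tj) = if tj = tj' then 1 else 0 := by
      rw [← one_smul (MonoidAlgebra ℤ_[p] G) (P tj), hLP tj' h, map_one, mul_one]
    have h1 := congrArg (Lfun bM' ψ tj') (hPtj tj)
    rw [Lfun_sum, h0] at h1
    simp only [hLP tj' h, ite_mul, one_mul, zero_mul, Finset.sum_ite_eq',
      Finset.mem_univ, if_pos] at h1
    rw [map_sum] at h1
    simp only [map_mul] at h1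
    exact h1.symm
  -- assemble
  set A : Matrix {x : Idx n m // tψ ≤ (x.1 : ℕ)} {x : Idx n m // tψ ≤ (x.1 : ℕ)} K :=
    Matrix.of fun r c : {x : Idx n m // tψ ≤ (x.1 : ℕ)} => f (Φmat r.1 c.1) with hA
  set B : Matrix {x : Idx n m // tψ ≤ (x.1 : ℕ)} {x : Idx n m // tψ ≤ (x.1 : ℕ)} K :=
    Matrix.of fun r c : {x : Idx n m // tψ ≤ (x.1 : ℕ)} => f (Ψmat r.1 c.1) with hB
  have hdetO : ∀ C : Matrix {x : Idx n m // tψ ≤ (x.1 : ℕ)} {x : Idx n m // tψ ≤ (x.1 : ℕ)} K,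
      (∀ r c, C r c ∈ O) → C.det ∈ O := by
    intro C hC
    rw [Matrix.det_apply]
    refine Subalgebra.sum_mem _ fun σ' _ => ?_
    rw [Units.smul_def]
    exact zsmul_mem (Subalgebra.prod_mem _ fun i _ => hC _ _) _
  have hAB : A * B = 1 := by
    ext r c
    rw [Matrix.mul_apply]
    have h1 : ∀ si : Idx n m, ¬ tψ ≤ (si.1 : ℕ) →
        f (Φmat r.1 si) * f (Ψmat si c.1) = 0 := fun si hsi => by
      rw [hvan r.1 si r.2 (by omega), zero_mul]
    have h2 : (∑ si : {x : Idx n m // tψ ≤ (x.1 : ℕ)}, f (Φmat r.1 si.1) * f (Ψmat si.1 c.1))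
        = ∑ si : Idx n m, f (Φmat r.1 si) * f (Ψmat si c.1) := by
      rw [← Finset.sum_subtype (Finset.univ.filter fun si : Idx n m => tψ ≤ (si.1 : ℕ))
        (fun si => by simp) fun si : Idx n m => f (Φmat r.1 si) * f (Ψmat si c.1)]
      exact Finset.sum_filter_of_ne fun si _ hne => by
        by_contra hle; exact hne (h1 si hle)
    calc (∑ si : {x : Idx n m // tψ ≤ (x.1 : ℕ)}, A r si * B si c)
        = ∑ si : Idx n m, f (Φmat r.1 si) * f (Ψmat si c.1) := by rw [← h2]; rfl
      _ = if c.1 = r.1 then 1 else 0 := hprod r.1 c.1 r.2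
      _ = (1 : Matrix {x : Idx n m // tψ ≤ (x.1 : ℕ)} {x : Idx n m // tψ ≤ (x.1 : ℕ)} K) r c := by
          by_cases h : r = c
          · subst h; rw [if_pos rfl, Matrix.one_apply_eq]
          · rw [if_neg (fun hh => h (Subtype.ext hh.symm)), Matrix.one_apply_ne fun hh => h hh]
  have hdetA : A.det ∈ O := hdetO A fun r c => hfO _
  have hdetB : B.det ∈ O := hdetO B fun r c => hfO _
  have hmul : A.det * B.det = 1 := by
    rw [← Matrix.det_mul, hAB, Matrix.det_one]
  exact ⟨hdetA, B.det, hdetB, hmul⟩
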